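/- Let $v_1,\ldots,v_n$ be nonzero vectors in $\mathbb{R}^d$ with $\|v_i\|_2 \le 1$ and let $\varepsilon_1,\ldots,\varepsilon_n$ be independent Rademacher variables. Then for every $x \in \mathbb{R}^d$, $\mathbb{P}(v_1\varepsilon_1 + \cdots + v_n\varepsilon_n = x) \le \binom{n}{\lfloor n/2 \rfloor}/2^n$. (Kleitman's theorem) -/

import Mathlib

open MeasureTheory ProbabilityTheory

/-- A Rademacher random variable takes values `1` and `-1` each with probability `1/2`. -/
def IsRademacher {Ω : Type*} [MeasurableSpace Ω] (μ : Measure Ω) (f : Ω → ℝ) : Prop :=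
  μ {ω | f ω = 1} = 1 / 2 ∧ μ {ω | f ω = -1} = 1 / 2

theorem kleitman_littlewood_offord
    {Ω : Type*} [MeasurableSpace Ω] (μ : Measure Ω) [IsProbabilityMeasure μ]
    (d n : ℕ) (v : ℕ → EuclideanSpace ℝ (Fin d))
    (hv0 : ∀ i < n, v i ≠ 0) (hv1 : ∀ i < n, ‖v i‖ ≤ 1)
    (ε : ℕ → Ω → ℝ) (hmeas : ∀ i, Measurable (ε i))
    (hindep : iIndepFun ε μ)
    (hrad : ∀ i, IsRademacher μ (ε i))
    (x : EuclideanSpace ℝ (Fin d)) :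
    μ {ω | ∑ i ∈ Finset.range n, ε i ω • v i = x}
      ≤ (n.choose (n / 2) : ENNReal) / 2 ^ n := by
  classical
  -- Step 1: find `w` with `⟪w, v i⟫ ≠ 0` for all `i < n`.
  obtain ⟨w, hw⟩ : ∃ w : EuclideanSpace ℝ (Fin d),
      ∀ i < n, inner ℝ w (v i) ≠ (0 : ℝ) := by
    by_contra h
    push_neg at h
    set s : Finset (Subspace ℝ (EuclideanSpace ℝ (Fin d))) :=
      (Finset.range n).image (fun i => LinearMap.ker (innerSL ℝ (v i)).toLinearMap) with hs
    have htop : ⊤ ∉ s := by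
      intro htop
      rw [hs, Finset.mem_image] at htop
      obtain ⟨i, hi, hker⟩ := htop
      have := hv0 i (Finset.mem_range.1 hi)
      apply this
      have hvmem : v i ∈ LinearMap.ker (innerSL ℝ (v i)).toLinearMap := by
        rw [hker]; exact Submodule.mem_top
      have h0 : inner ℝ (v i) (v i) = (0 : ℝ) := by
        simpa using LinearMap.mem_ker.mp hvmem
      exact inner_self_eq_zero.mp h0
    apply Subspace.biUnion_ne_univ_of_top_notMem htop
    ext u
    simp only [Set.mem_iUnion, Set.mem_univ, iff_true]
    obtain ⟨i, hi, hu⟩ := h u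
    refine ⟨LinearMap.ker (innerSL ℝ (v i)).toLinearMap, ?_, ?_⟩
    · exact Finset.mem_image_of_mem _ (Finset.mem_range.2 hi)
    · show inner ℝ (v i) u = (0 : ℝ)
      rwa [real_inner_comm]
  -- signs
  set c : ℕ → ℝ := fun i => if (0 : ℝ) < inner ℝ w (v i) then 1 else -1 with hc
  have hc1 : ∀ i, c i = 1 ∨ c i = -1 := by
    intro i
    by_cases h : (0 : ℝ) < inner ℝ w (v i)
    · left; rw [hc]; simp only [if_pos h]
    · right; rw [hc]; simp only [if_neg h]
  have hcpos : ∀ i < n, 0 < c i * inner ℝ w (v i) := by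
    intro i hi
    by_cases h : (0 : ℝ) < inner ℝ w (v i)
    · rw [hc]; simp only [if_pos h]; simpa using h
    · have hlt : (inner ℝ w (v i) : ℝ) < 0 := lt_of_le_of_ne (not_lt.1 h) (hw i hi)
      rw [hc]; simp only [if_neg h]
      nlinarith
  -- coefficient function
  set e : Finset (Fin n) → ℕ → ℝ := fun A i =>
    if (∃ h : i < n, (⟨i, h⟩ : Fin n) ∈ A) then c i else -c i with he
  have heA : ∀ (A : Finset (Fin n)) (i : ℕ) (h : i < n),
      e A i = if (⟨i, h⟩ : Fin n) ∈ A then c i else -c i := by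
    intro A i h
    by_cases hm : (⟨i, h⟩ : Fin n) ∈ A
    · simp [he, hm, h]
    · have hnm : ¬ (∃ h : i < n, (⟨i, h⟩ : Fin n) ∈ A) := by
        rintro ⟨h', hm'⟩; exact hm hm'
      simp [he, hnm, hm]
  -- antichain of sign patterns with sum equal to x
  set 𝒜 : Finset (Finset (Fin n)) :=
    Finset.univ.filter (fun A => ∑ i ∈ Finset.range n, e A i • v i = x) with h𝒜
  have hanti : IsAntichain (· ⊆ ·) (𝒜 : Set (Finset (Fin n))) := by
    rintro A hA B hB hne hAB
    rw [h𝒜, Finset.coe_filter] at hA hB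
    obtain ⟨-, hAx⟩ := hA
    obtain ⟨-, hBx⟩ := hB
    obtain ⟨j, hjB, hjA⟩ : ∃ j, j ∈ B ∧ j ∉ A := by
      by_contra h
      push_neg at h
      exact hne (Finset.Subset.antisymm hAB h)
    have hsum0 : ∑ i ∈ Finset.range n, (e B i - e A i) • v i = 0 := by
      have h1 : ∑ i ∈ Finset.range n, (e B i - e A i) • v i
          = (∑ i ∈ Finset.range n, e B i • v i) - ∑ i ∈ Finset.range n, e A i • v i := by
        rw [← Finset.sum_sub_distrib]
        exact Finset.sum_congr rfl fun i _ => sub_smul _ _ _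
      rw [h1, hAx, hBx, sub_self]
    have hinner : ∑ i ∈ Finset.range n, (e B i - e A i) * inner ℝ w (v i) = (0 : ℝ) := by
      have h2 : (inner ℝ w (∑ i ∈ Finset.range n, (e B i - e A i) • v i) : ℝ)
          = ∑ i ∈ Finset.range n, (e B i - e A i) * inner ℝ w (v i) := by
        rw [inner_sum]
        exact Finset.sum_congr rfl fun i _ => real_inner_smul_right _ _ _
      rw [← h2, hsum0, inner_zero_right]
    have hpos : 0 < ∑ i ∈ Finset.range n, (e B i - e A i) * inner ℝ w (v i) := by
      apply Finset.sum_pos'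
      · intro i hi
        have hi' := Finset.mem_range.1 hi
        rw [heA A i hi', heA B i hi']
        by_cases hiA : (⟨i, hi'⟩ : Fin n) ∈ A
        · have hiB : (⟨i, hi'⟩ : Fin n) ∈ B := hAB hiA
          simp [hiA, hiB]
        · by_cases hiB : (⟨i, hi'⟩ : Fin n) ∈ B
          · simp only [hiA, hiB, if_true, if_false, sub_neg_eq_add]
            have := hcpos i hi'
            nlinarith
          · simp [hiA, hiB]
      · refine ⟨(j : ℕ), Finset.mem_range.2 j.2, ?_⟩
        have hj' : (j : ℕ) < n := j.2
        rw [heA A j hj', heA B j hj']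
        have hjc : (⟨(j : ℕ), hj'⟩ : Fin n) = j := by ext; rfl
        rw [hjc]
        simp only [hjB, hjA, if_true, if_false, sub_neg_eq_add]
        have := hcpos j hj'
        nlinarith
    exact absurd hinner (ne_of_gt hpos)
  have hcard : 𝒜.card ≤ n.choose (n / 2) := by
    simpa using IsAntichain.sperner hanti
  -- the events
  set T : Finset (Fin n) → Set Ω := fun A => ⋂ i ∈ Finset.range n, ε i ⁻¹' {e A i} with hT
  set N : ℕ → Set Ω := fun i => {ω | ε i ω ≠ 1 ∧ ε i ω ≠ -1} with hN
  have hNnull : ∀ i, μ (N i) = 0 := by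
    intro i
    have hS : MeasurableSet (ε i ⁻¹' {1} ∪ ε i ⁻¹' {-1}) :=
      ((hmeas i) (measurableSet_singleton 1)).union ((hmeas i) (measurableSet_singleton (-1)))
    have hd : Disjoint (ε i ⁻¹' {1}) (ε i ⁻¹' {-1}) := by
      apply Set.disjoint_left.2
      intro ω h1 h2
      simp only [Set.mem_preimage, Set.mem_singleton_iff] at h1 h2
      rw [h1] at h2; norm_num at h2
    have hSmeas : μ (ε i ⁻¹' {1} ∪ ε i ⁻¹' {-1}) = 1 := by
      rw [measure_union hd ((hmeas i) (measurableSet_singleton (-1)))]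
      have h1 : μ (ε i ⁻¹' {1}) = 1 / 2 := (hrad i).1
      have h2 : μ (ε i ⁻¹' {-1}) = 1 / 2 := (hrad i).2
      rw [h1, h2, ENNReal.div_add_div_same, one_add_one_eq_two,
        ENNReal.div_self two_ne_zero ENNReal.ofNat_ne_top]
    have hEq : N i = (ε i ⁻¹' {1} ∪ ε i ⁻¹' {-1})ᶜ := by
      rw [hN]
      ext ω
      simp only [Set.mem_setOf_eq, Set.mem_compl_iff, Set.mem_union, Set.mem_preimage,
        Set.mem_singleton_iff, not_or]
    rw [hEq, prob_compl_eq_one_sub hS, hSmeas, tsub_self]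
  have hTmeas : ∀ A, μ (T A) = (1 / 2 : ENNReal) ^ n := by
    intro A
    have hfac : ∀ i ∈ Finset.range n, μ (ε i ⁻¹' {e A i}) = (1 / 2 : ENNReal) := by
      intro i _
      rcases hc1 i with hci | hci
      · by_cases hm : (∃ h : i < n, (⟨i, h⟩ : Fin n) ∈ A)
        · have h3 : e A i = 1 := by rw [he]; simp [hm, hci]
          rw [h3]; exact (hrad i).1
        · have h3 : e A i = -1 := by rw [he]; simp [hm, hci]
          rw [h3]; exact (hrad i).2
      · by_cases hm : (∃ h : i < n, (⟨i, h⟩ : Fin n) ∈ A)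
        · have h3 : e A i = -1 := by rw [he]; simp [hm, hci]
          rw [h3]; exact (hrad i).2
        · have h3 : e A i = 1 := by rw [he]; simp [hm, hci]
          rw [h3]; exact (hrad i).1
    calc μ (T A) = ∏ i ∈ Finset.range n, μ (ε i ⁻¹' {e A i}) := by
          rw [hT]
          exact hindep.meas_biInter (S := Finset.range n)
            (s := fun i => ε i ⁻¹' {e A i})
            (fun i _ => ⟨{e A i}, measurableSet_singleton _, rfl⟩)
      _ = ∏ _i ∈ Finset.range n, (1 / 2 : ENNReal) := Finset.prod_congr rfl hfac
      _ = (1 / 2 : ENNReal) ^ n := by rw [Finset.prod_const, Finset.card_range]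
  -- inclusion
  have hsub : {ω | ∑ i ∈ Finset.range n, ε i ω • v i = x}
      ⊆ (⋃ A ∈ 𝒜, T A) ∪ ⋃ i ∈ Finset.range n, N i := by
    intro ω hω
    by_cases hgood : ∀ i < n, ε i ω = 1 ∨ ε i ω = -1
    · left
      set A : Finset (Fin n) := Finset.univ.filter (fun i : Fin n => ε i ω = c i) with hA
      have hval : ∀ i < n, ε i ω = e A i := by
        intro i hi
        rw [heA A i hi]
        by_cases hm : (⟨i, hi⟩ : Fin n) ∈ A
        · rw [if_pos hm]
          have := (Finset.mem_filter.1 hm).2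
          simpa using this
        · rw [if_neg hm]
          have hne : ε i ω ≠ c i := by
            intro h
            exact hm (Finset.mem_filter.2 ⟨Finset.mem_univ _, by simpa using h⟩)
          rcases hgood i hi with h1 | h1 <;> rcases hc1 i with h2 | h2 <;>
            simp [h1, h2] at hne ⊢
      have hAmem : A ∈ 𝒜 := by
        rw [h𝒜, Finset.mem_filter]
        refine ⟨Finset.mem_univ _, ?_⟩
        rw [← hω]
        exact Finset.sum_congr rfl fun i hi => by
          rw [hval i (Finset.mem_range.1 hi)]
      apply Set.mem_biUnion hAmem
      rw [hT]
      simp only [Set.mem_iInter, Set.mem_preimage, Set.mem_singleton_iff]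
      intro i hi
      exact hval i (Finset.mem_range.1 hi)
    · right
      push_neg at hgood
      obtain ⟨i, hi, h1, h2⟩ := hgood
      exact Set.mem_biUnion (Finset.mem_range.2 hi) ⟨h1, h2⟩
  -- conclude
  calc μ {ω | ∑ i ∈ Finset.range n, ε i ω • v i = x}
      ≤ μ ((⋃ A ∈ 𝒜, T A) ∪ ⋃ i ∈ Finset.range n, N i) := measure_mono hsub
    _ ≤ μ (⋃ A ∈ 𝒜, T A) + μ (⋃ i ∈ Finset.range n, N i) := measure_union_le _ _
    _ = μ (⋃ A ∈ 𝒜, T A) := by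
        have h0 : μ (⋃ i ∈ Finset.range n, N i) = 0 := by
          refine le_antisymm ?_ zero_le
          calc μ (⋃ i ∈ Finset.range n, N i) ≤ ∑ i ∈ Finset.range n, μ (N i) :=
              measure_biUnion_finset_le _ _
            _ = 0 := by simp [hNnull]
        rw [h0, add_zero]
    _ ≤ ∑ A ∈ 𝒜, μ (T A) := measure_biUnion_finset_le _ _
    _ = 𝒜.card * (1 / 2 : ENNReal) ^ n := by
        rw [Finset.sum_congr rfl fun A _ => hTmeas A, Finset.sum_const, nsmul_eq_mul]
    _ ≤ (n.choose (n / 2) : ENNReal) * (1 / 2 : ENNReal) ^ n := by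
        exact mul_le_mul_left (by exact_mod_cast hcard) _
    _ = (n.choose (n / 2) : ENNReal) / 2 ^ n := by
        rw [one_div, ← ENNReal.inv_pow, ← div_eq_mul_inv]
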